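/- (Corollary.) For any n-round dynamic inference model, any contextual loss function ℓ : 𝒳 × 𝒴 × 𝒴̂ → ℝ, any i ∈ {1,…,n}, and any initial distribution P_{Xᵢ} on 𝒳 for round i, the minimum over all estimation strategies (ψᵢ,…,ψₙ) for rounds i through n of the expected accumulated loss E[Σ_{j=i}^n ℓ(Xⱼ, Yⱼ, Ŷⱼ)] equals E_{Xᵢ∼P_{Xᵢ}}[V*ᵢ(Xᵢ)], and this minimum is achieved by the dynamic-programming estimators (ψ*ᵢ,…,ψ*ₙ). -/

import Mathlib

noncomputable section

/-- Expectation of a real-valued function under a probability mass function on a finite type. -/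
def pexp {α : Type*} [Fintype α] (p : PMF α) (f : α → ℝ) : ℝ :=
  ∑ a, (p a).toReal * f a

/-- A (history-dependent) estimation strategy: the round-`i` estimator maps the current
observation `Xᵢ`, the past observations `X^{i-1}` and the past revealed quantities `Y^{i-1}`
(together forming `(X^i, Y^{i-1})`) to an estimate `Ŷᵢ`. -/
abbrev Strategy (𝓧 𝓨 𝓨h : Type*) : Type _ := ℕ → 𝓧 → List 𝓧 → List 𝓨 → 𝓨h

/-- The strategy induced by a sequence of Markov estimators `ψᵢ : 𝓧 → 𝓨h`. -/
def markovStrategy {𝓧 𝓨 𝓨h : Type*} (ψ : ℕ → 𝓧 → 𝓨h) : Strategy 𝓧 𝓨 𝓨h :=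
  fun i x _ _ => ψ i x

/-- Replace the round-`n` estimator of a strategy by another one. -/
def replaceRound {𝓧 𝓨 𝓨h : Type*} (ψ : Strategy 𝓧 𝓨 𝓨h) (n : ℕ)
    (ψn : Strategy 𝓧 𝓨 𝓨h) : Strategy 𝓧 𝓨 𝓨h :=
  fun i x hx hy => if i = n then ψn i x hx hy else ψ i x hx hy

/-- The observation-estimate loss `ℓ̄ᵢ(x, yh) = E_{Y ∼ νᵢ(x)}[ℓ(x, Y, yh)]`. -/
def lbar {𝓧 𝓨 𝓨h : Type*} [Fintype 𝓨] (ν : ℕ → 𝓧 → PMF 𝓨)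
    (ℓ : 𝓧 → 𝓨 → 𝓨h → ℝ) (i : ℕ) (x : 𝓧) (yh : 𝓨h) : ℝ :=
  pexp (ν i x) fun y => ℓ x y yh

/-- `lossFrom κ ν L ψ i m x hx hy` : expected accumulated loss over `m` rounds (rounds
`i, i+1, …, i+m-1`), starting at round `i` with current observation `x`, past observation
history `hx` and past quantity history `hy`, under the (possibly round-dependent) contextual
loss `L` and the strategy `ψ`.  The process evolves as `Yᵢ ∼ νᵢ(Xᵢ)` (conditionally
independent of everything else given `Xᵢ`), `Ŷᵢ = ψᵢ(X^i, Y^{i-1})`,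
`X_{i+1} ∼ κ_{i+1}(Xᵢ, Ŷᵢ)`. -/
def lossFrom {𝓧 𝓨 𝓨h : Type*} [Fintype 𝓧] [Fintype 𝓨]
    (κ : ℕ → 𝓧 → 𝓨h → PMF 𝓧) (ν : ℕ → 𝓧 → PMF 𝓨)
    (L : ℕ → 𝓧 → 𝓨 → 𝓨h → ℝ) (ψ : Strategy 𝓧 𝓨 𝓨h) :
    ℕ → ℕ → 𝓧 → List 𝓧 → List 𝓨 → ℝ
  | _, 0, _, _, _ => 0
  | i, m + 1, x, hx, hy =>
      pexp (ν i x) fun y =>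
        L i x y (ψ i x hx hy) +
          pexp (κ (i + 1) x (ψ i x hx hy)) fun x' =>
            lossFrom κ ν L ψ (i + 1) m x' (hx ++ [x]) (hy ++ [y])

/-- The inference loss `J(ψ) = E[∑_{i=1}^n ℓ(Xᵢ, Yᵢ, Ŷᵢ)]` of strategy `ψ` for the
`n`-round dynamic inference problem with initial distribution `P₁`. -/
def J {𝓧 𝓨 𝓨h : Type*} [Fintype 𝓧] [Fintype 𝓨] (P₁ : PMF 𝓧)
    (κ : ℕ → 𝓧 → 𝓨h → PMF 𝓧) (ν : ℕ → 𝓧 → PMF 𝓨)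
    (ℓ : 𝓧 → 𝓨 → 𝓨h → ℝ) (n : ℕ) (ψ : Strategy 𝓧 𝓨 𝓨h) : ℝ :=
  pexp P₁ fun x => lossFrom κ ν (fun _ => ℓ) ψ 1 n x [] []

/-- `Eat κ ν g ψ i s x hx hy` : the expectation `E[g(X_{i+s}, Y_{i+s}, Ŷ_{i+s})]` of a
single-round quantity at round `i + s`, for the process started at round `i` with current
observation `x` and histories `hx`, `hy`, run under the strategy `ψ`. -/
def Eat {𝓧 𝓨 𝓨h : Type*} [Fintype 𝓧] [Fintype 𝓨]
    (κ : ℕ → 𝓧 → 𝓨h → PMF 𝓧) (ν : ℕ → 𝓧 → PMF 𝓨)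
    (g : 𝓧 → 𝓨 → 𝓨h → ℝ) (ψ : Strategy 𝓧 𝓨 𝓨h) :
    ℕ → ℕ → 𝓧 → List 𝓧 → List 𝓨 → ℝ
  | i, 0, x, hx, hy => pexp (ν i x) fun y => g x y (ψ i x hx hy)
  | i, s + 1, x, hx, hy =>
      pexp (ν i x) fun y =>
        pexp (κ (i + 1) x (ψ i x hx hy)) fun x' =>
          Eat κ ν g ψ (i + 1) s x' (hx ++ [x]) (hy ++ [y])

/-- The dynamic-programming value function: `Vstar κ ν ℓ i m x` is `V*ᵢ(x)` when exactly `m`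
rounds follow round `i` (so round `i` is the last round iff `m = 0`):
`V*ᵢ(x) = min_{yh} Q*ᵢ(x, yh)`, with `Q*` as in `Qstar`. -/
def Vstar {𝓧 𝓨 𝓨h : Type*} [Fintype 𝓧] [Fintype 𝓨]
    (κ : ℕ → 𝓧 → 𝓨h → PMF 𝓧) (ν : ℕ → 𝓧 → PMF 𝓨)
    (ℓ : 𝓧 → 𝓨 → 𝓨h → ℝ) : ℕ → ℕ → 𝓧 → ℝ
  | i, 0, x => ⨅ yh, lbar ν ℓ i x yh
  | i, m + 1, x =>
      ⨅ yh, (lbar ν ℓ i x yh + pexp (κ (i + 1) x yh) fun x' => Vstar κ ν ℓ (i + 1) m x')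

/-- The dynamic-programming Q-function: `Qstar κ ν ℓ i m x yh` is `Q*ᵢ(x, yh)` when exactly `m`
rounds follow round `i`: `Q*ₙ(x,yh) = ℓ̄ₙ(x,yh)` in the last round, and otherwise
`Q*ᵢ(x,yh) = ℓ̄ᵢ(x,yh) + E_{x' ∼ κ_{i+1}(x,yh)}[V*_{i+1}(x')]`. -/
def Qstar {𝓧 𝓨 𝓨h : Type*} [Fintype 𝓧] [Fintype 𝓨]
    (κ : ℕ → 𝓧 → 𝓨h → PMF 𝓧) (ν : ℕ → 𝓧 → PMF 𝓨)
    (ℓ : 𝓧 → 𝓨 → 𝓨h → ℝ) : ℕ → ℕ → 𝓧 → 𝓨h → ℝ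
  | i, 0, x, yh => lbar ν ℓ i x yh
  | i, m + 1, x, yh =>
      lbar ν ℓ i x yh + pexp (κ (i + 1) x yh) fun x' => Vstar κ ν ℓ (i + 1) m x'

section Aux

variable {𝓧 𝓨 𝓨h : Type*} [Fintype 𝓧] [Fintype 𝓨]

lemma pexp_mono {α : Type*} [Fintype α] (p : PMF α) {f g : α → ℝ}
    (h : ∀ a, f a ≤ g a) : pexp p f ≤ pexp p g := by
  refine Finset.sum_le_sum fun a _ => ?_
  exact mul_le_mul_of_nonneg_left (h a) ENNReal.toReal_nonneg

lemma pexp_const {α : Type*} [Fintype α] (p : PMF α) (c : ℝ) :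
    pexp p (fun _ => c) = c := by
  have hsum : ∑ a, (p a).toReal = 1 := by
    have h1 := p.tsum_coe
    rw [tsum_fintype] at h1
    have := ENNReal.toReal_sum (s := (Finset.univ : Finset α)) (f := fun a => p a)
      (fun a _ => p.apply_ne_top a)
    rw [h1] at this
    simpa using this.symm
  simp only [pexp]
  rw [← Finset.sum_mul, hsum, one_mul]

lemma pexp_add {α : Type*} [Fintype α] (p : PMF α) (f g : α → ℝ) :
    pexp p (fun a => f a + g a) = pexp p f + pexp p g := by
  simp [pexp, mul_add, Finset.sum_add_distrib]

variable [Nonempty 𝓨h] [Fintype 𝓨h]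
variable (κ : ℕ → 𝓧 → 𝓨h → PMF 𝓧) (ν : ℕ → 𝓧 → PMF 𝓨) (ℓ : 𝓧 → 𝓨 → 𝓨h → ℝ)

lemma Vstar_eq_iInf_Qstar (i m : ℕ) (x : 𝓧) :
    Vstar κ ν ℓ i m x = ⨅ yh, Qstar κ ν ℓ i m x yh := by
  cases m <;> rfl

lemma Vstar_le_Qstar (i m : ℕ) (x : 𝓧) (yh : 𝓨h) :
    Vstar κ ν ℓ i m x ≤ Qstar κ ν ℓ i m x yh := by
  rw [Vstar_eq_iInf_Qstar]
  exact ciInf_le (Finite.bddBelow_range _) yh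

lemma lossFrom_ge_Vstar (ψ : Strategy 𝓧 𝓨 𝓨h) :
    ∀ m i x hx hy, Vstar κ ν ℓ i m x ≤
      lossFrom κ ν (fun _ => ℓ) ψ i (m + 1) x hx hy := by
  intro m
  induction m with
  | zero =>
      intro i x hx hy
      have h : lossFrom κ ν (fun _ => ℓ) ψ i 1 x hx hy
          = Qstar κ ν ℓ i 0 x (ψ i x hx hy) := by
        simp [lossFrom, Qstar, lbar, pexp]
      rw [h]
      exact Vstar_le_Qstar κ ν ℓ i 0 x _
  | succ m ih =>
      intro i x hx hy
      set yh0 := ψ i x hx hy with hyh0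
      have h : lossFrom κ ν (fun _ => ℓ) ψ i (m + 2) x hx hy
          = pexp (ν i x) fun y => ℓ x y yh0 +
              pexp (κ (i + 1) x yh0) fun x' =>
                lossFrom κ ν (fun _ => ℓ) ψ (i + 1) (m + 1) x' (hx ++ [x]) (hy ++ [y]) := by
        rfl
      rw [h]
      have step : Qstar κ ν ℓ i (m + 1) x yh0 ≤ pexp (ν i x) fun y => ℓ x y yh0 +
          pexp (κ (i + 1) x yh0) fun x' =>
            lossFrom κ ν (fun _ => ℓ) ψ (i + 1) (m + 1) x' (hx ++ [x]) (hy ++ [y]) := by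
        have hQ : Qstar κ ν ℓ i (m + 1) x yh0
            = pexp (ν i x) fun y => ℓ x y yh0 +
                pexp (κ (i + 1) x yh0) fun x' => Vstar κ ν ℓ (i + 1) m x' := by
          rw [pexp_add]
          simp [Qstar, lbar, pexp_const]
        rw [hQ]
        refine pexp_mono _ fun y => add_le_add_right (pexp_mono _ fun x' => ?_) _
        exact ih (i + 1) x' (hx ++ [x]) (hy ++ [y])
      exact le_trans (Vstar_le_Qstar κ ν ℓ i (m + 1) x yh0) step

lemma lossFrom_markov_eq_Vstar (n i₀ : ℕ) (ψstar : ℕ → 𝓧 → 𝓨h)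
    (hstar : ∀ j, i₀ ≤ j → j ≤ n → ∀ x : 𝓧, ∀ yh : 𝓨h,
      Qstar κ ν ℓ j (n - j) x (ψstar j x) ≤ Qstar κ ν ℓ j (n - j) x yh) :
    ∀ m i, i₀ ≤ i → i + m = n → ∀ x hx hy,
      lossFrom κ ν (fun _ => ℓ) (markovStrategy ψstar) i (m + 1) x hx hy
        = Vstar κ ν ℓ i m x := by
  intro m
  induction m with
  | zero =>
      intro i hii hin x hx hy
      have hni : n - i = 0 := by omega
      have hopt := hstar i hii (by omega) x
      rw [hni] at hopt
      have h : lossFrom κ ν (fun _ => ℓ) (markovStrategy ψstar) i 1 x hx hy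
          = Qstar κ ν ℓ i 0 x (ψstar i x) := by
        simp [lossFrom, Qstar, lbar, pexp, markovStrategy]
      rw [h]
      refine le_antisymm ?_ (Vstar_le_Qstar κ ν ℓ i 0 x _)
      rw [Vstar_eq_iInf_Qstar]
      exact le_ciInf fun yh => hopt yh
  | succ m ih =>
      intro i hii hin x hx hy
      have hni : n - i = m + 1 := by omega
      have hopt := hstar i hii (by omega) x
      rw [hni] at hopt
      have h : lossFrom κ ν (fun _ => ℓ) (markovStrategy ψstar) i (m + 2) x hx hy
          = pexp (ν i x) fun y => ℓ x y (ψstar i x) +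
              pexp (κ (i + 1) x (ψstar i x)) fun x' =>
                lossFrom κ ν (fun _ => ℓ) (markovStrategy ψstar) (i + 1) (m + 1) x'
                  (hx ++ [x]) (hy ++ [y]) := by
        rfl
      rw [h]
      have hinner : ∀ y, (pexp (κ (i + 1) x (ψstar i x)) fun x' =>
          lossFrom κ ν (fun _ => ℓ) (markovStrategy ψstar) (i + 1) (m + 1) x'
            (hx ++ [x]) (hy ++ [y]))
          = pexp (κ (i + 1) x (ψstar i x)) fun x' => Vstar κ ν ℓ (i + 1) m x' := by
        intro y
        congr 1
        funext x'
        exact ih (i + 1) (by omega) (by omega) x' (hx ++ [x]) (hy ++ [y])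
      have h2 : (pexp (ν i x) fun y => ℓ x y (ψstar i x) +
            pexp (κ (i + 1) x (ψstar i x)) fun x' =>
              lossFrom κ ν (fun _ => ℓ) (markovStrategy ψstar) (i + 1) (m + 1) x'
                (hx ++ [x]) (hy ++ [y]))
          = Qstar κ ν ℓ i (m + 1) x (ψstar i x) := by
        calc (pexp (ν i x) fun y => ℓ x y (ψstar i x) +
              pexp (κ (i + 1) x (ψstar i x)) fun x' =>
                lossFrom κ ν (fun _ => ℓ) (markovStrategy ψstar) (i + 1) (m + 1) x'
                  (hx ++ [x]) (hy ++ [y]))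
            = pexp (ν i x) fun y => ℓ x y (ψstar i x) +
                pexp (κ (i + 1) x (ψstar i x)) fun x' => Vstar κ ν ℓ (i + 1) m x' := by
              congr 1; funext y; rw [hinner y]
          _ = Qstar κ ν ℓ i (m + 1) x (ψstar i x) := by
              rw [pexp_add]
              simp [Qstar, lbar, pexp_const]
      rw [h2]
      refine le_antisymm ?_ (Vstar_le_Qstar κ ν ℓ i (m + 1) x _)
      rw [Vstar_eq_iInf_Qstar]
      exact le_ciInf fun yh => hopt yh

end Aux

/-- **Corollary.** For any `n`-round dynamic inference model, contextual loss
`ℓ`, round `i ∈ {1,…,n}` and any initial distribution `Pᵢ` for round `i`: the minimum, over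
all history-dependent strategies for rounds `i` through `n`, of the expected accumulated loss
`E[∑_{j=i}^n ℓ(Xⱼ, Yⱼ, Ŷⱼ)]` (with `Xᵢ ∼ Pᵢ`) equals `E[V*ᵢ(Xᵢ)]`, and this minimum is
achieved by the dynamic-programming estimators `ψstar` (any Markov strategy with `ψstar j x`
a minimiser of `Q*ⱼ(x, ·)` for `j ∈ {i,…,n}`). -/
theorem min_accumulated_loss_eq_expected_Vstar {𝓧 𝓨 𝓨h : Type*} [Fintype 𝓧] [Nonempty 𝓧] [Fintype 𝓨] [Nonempty 𝓨]
    [Fintype 𝓨h] [Nonempty 𝓨h]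
    (κ : ℕ → 𝓧 → 𝓨h → PMF 𝓧) (ν : ℕ → 𝓧 → PMF 𝓨) (ℓ : 𝓧 → 𝓨 → 𝓨h → ℝ)
    (n i : ℕ) (hi1 : 1 ≤ i) (hin : i ≤ n) (Pᵢ : PMF 𝓧)
    (ψstar : ℕ → 𝓧 → 𝓨h)
    (hstar : ∀ j, i ≤ j → j ≤ n → ∀ x : 𝓧, ∀ yh : 𝓨h,
      Qstar κ ν ℓ j (n - j) x (ψstar j x) ≤ Qstar κ ν ℓ j (n - j) x yh) :
    IsLeast
        (Set.range fun ψ : Strategy 𝓧 𝓨 𝓨h =>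
          pexp Pᵢ fun x => lossFrom κ ν (fun _ => ℓ) ψ i (n - i + 1) x [] [])
        (pexp Pᵢ fun x => Vstar κ ν ℓ i (n - i) x) ∧
      (pexp Pᵢ fun x =>
          lossFrom κ ν (fun _ => ℓ) (markovStrategy ψstar) i (n - i + 1) x [] []) =
        pexp Pᵢ fun x => Vstar κ ν ℓ i (n - i) x := by
  have heq : (pexp Pᵢ fun x =>
      lossFrom κ ν (fun _ => ℓ) (markovStrategy ψstar) i (n - i + 1) x [] []) =
      pexp Pᵢ fun x => Vstar κ ν ℓ i (n - i) x := by
    congr 1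
    funext x
    exact lossFrom_markov_eq_Vstar κ ν ℓ n i ψstar
      (fun j hij hjn => hstar j hij hjn) (n - i) i le_rfl (by omega) x [] []
  refine ⟨⟨⟨markovStrategy ψstar, heq⟩, ?_⟩, heq⟩
  rintro r ⟨ψ, rfl⟩
  exact pexp_mono _ fun x => lossFrom_ge_Vstar κ ν ℓ ψ (n - i) i x [] []

end
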